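/- For any positive integer k, setting n = ⌈k/2⌉, the number of directed multigraphs on two vertices with exactly k edges, up to graph isomorphism, equals n(n+1)(3k−4n+1)/3 + (n+1)·⌈(k+1)/2⌉. -/

import Mathlib

section Aux
open Finset

open Finset

def tupSet (k : ℕ) : Finset (ℕ × ℕ × ℕ × ℕ) :=
  ((range (k+1)) ×ˢ (range (k+1)) ×ˢ (range (k+1)) ×ˢ (range (k+1))).filter
    (fun t => t.1 + t.2.1 + t.2.2.1 + t.2.2.2 = k)

lemma mem_tupSet {k : ℕ} {t : ℕ × ℕ × ℕ × ℕ} :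
    t ∈ tupSet k ↔ t.1 + t.2.1 + t.2.2.1 + t.2.2.2 = k := by
  obtain ⟨a, b, c, d⟩ := t
  simp only [tupSet, mem_filter, mem_product, mem_range]
  omega

def tripSet (k : ℕ) : Finset (ℕ × ℕ × ℕ) :=
  ((range (k+1)) ×ˢ (range (k+1)) ×ˢ (range (k+1))).filter
    (fun t => t.1 + t.2.1 + t.2.2 = k)

lemma mem_tripSet {k : ℕ} {t : ℕ × ℕ × ℕ} :
    t ∈ tripSet k ↔ t.1 + t.2.1 + t.2.2 = k := by
  obtain ⟨a, b, c⟩ := t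
  simp only [tripSet, mem_filter, mem_product, mem_range]
  omega

def pairSet (k : ℕ) : Finset (ℕ × ℕ) :=
  ((range (k+1)) ×ˢ (range (k+1))).filter (fun t => t.1 + t.2 = k)

lemma mem_pairSet {k : ℕ} {t : ℕ × ℕ} : t ∈ pairSet k ↔ t.1 + t.2 = k := by
  obtain ⟨a, b⟩ := t
  simp only [pairSet, mem_filter, mem_product, mem_range]
  omega

lemma sumA (k : ℕ) : (∑ a ∈ range (k+1), (a+1)) * 2 = (k+1)*(k+2) := by
  induction k with
  | zero => rfl
  | succ m ih => rw [Finset.sum_range_succ, add_mul, ih]; ring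

lemma sumB (k : ℕ) : (∑ a ∈ range (k+1), (a+1)*(a+2)) * 3 = (k+1)*(k+2)*(k+3) := by
  induction k with
  | zero => rfl
  | succ m ih => rw [Finset.sum_range_succ, add_mul, ih]; ring

lemma card_pairSet (k : ℕ) : (pairSet k).card = k + 1 := by
  rw [show k + 1 = (range (k+1)).card by simp]
  apply Finset.card_nbij' (i := fun t => t.1) (j := fun a => (a, k - a))
  · intro t ht; simp only [mem_coe, mem_range]; have := mem_pairSet.mp ht; omega
  · intro a ha; simp only [mem_coe, mem_range] at ha; simp only [mem_coe, mem_pairSet]; omega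
  · intro t ht; have := mem_pairSet.mp ht
    obtain ⟨a, b⟩ := t; simp only at this ⊢
    rw [Prod.mk.injEq]; omega
  · intro a ha; rfl

lemma card_tripSet (k : ℕ) : (tripSet k).card * 2 = (k + 1) * (k + 2) := by
  have h := Finset.card_eq_sum_card_fiberwise (s := tripSet k) (t := range (k+1))
    (f := fun t => t.1) (fun t ht => by
      simp only [mem_coe, mem_range]; have := mem_tripSet.mp ht; omega)
  have hfib : ∀ a ∈ range (k+1),
      ((tripSet k).filter (fun t => t.1 = a)).card = k - a + 1 := by
    intro a ha
    simp only [mem_range] at ha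
    rw [← card_pairSet (k - a)]
    apply Finset.card_nbij' (i := fun t => t.2) (j := fun p => (a, p))
    · intro t ht; simp only [mem_coe, mem_filter] at ht
      have := mem_tripSet.mp ht.1; simp only [mem_coe, mem_pairSet]; omega
    · intro p hp; have := mem_pairSet.mp hp
      refine mem_filter.mpr ⟨mem_tripSet.mpr ?_, rfl⟩
      show a + p.1 + p.2 = k; omega
    · intro t ht; simp only [mem_coe, mem_filter] at ht
      obtain ⟨u, v⟩ := t; simp only at ht ⊢; rw [ht.2]
    · intro p hp; rfl
  rw [h, Finset.sum_congr rfl hfib]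
  have h2 : ∑ a ∈ range (k+1), (k - a + 1) = ∑ a ∈ range (k+1), (a + 1) := by
    rw [← Finset.sum_range_reflect]
    apply Finset.sum_congr rfl; intro a ha; simp only [mem_range] at ha; omega
  rw [h2, sumA]

lemma card_tupSet (k : ℕ) : (tupSet k).card * 6 = (k + 1) * (k + 2) * (k + 3) := by
  have h := Finset.card_eq_sum_card_fiberwise (s := tupSet k) (t := range (k+1))
    (f := fun t => t.1) (fun t ht => by
      simp only [mem_coe, mem_range]; have := mem_tupSet.mp ht; omega)
  have hfib : ∀ a ∈ range (k+1),
      ((tupSet k).filter (fun t => t.1 = a)).card = (tripSet (k - a)).card := by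
    intro a ha
    simp only [mem_range] at ha
    apply Finset.card_nbij' (i := fun t => t.2) (j := fun p => (a, p))
    · intro t ht; simp only [mem_coe, mem_filter] at ht
      have := mem_tupSet.mp ht.1; simp only [mem_coe, mem_tripSet]; omega
    · intro p hp; have := mem_tripSet.mp hp
      refine mem_filter.mpr ⟨mem_tupSet.mpr ?_, rfl⟩
      show a + p.1 + p.2.1 + p.2.2 = k; omega
    · intro t ht; simp only [mem_coe, mem_filter] at ht
      obtain ⟨u, v⟩ := t; simp only at ht ⊢; rw [ht.2]
    · intro p hp; rfl
  rw [h, Finset.sum_congr rfl hfib]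
  have h2 : (∑ a ∈ range (k+1), (tripSet (k - a)).card) * 6
      = ∑ a ∈ range (k+1), ((k - a) + 1) * ((k - a) + 2) * 3 := by
    rw [Finset.sum_mul]
    apply Finset.sum_congr rfl; intro a _
    have := card_tripSet (k - a); omega
  rw [h2]
  have h3 : ∑ a ∈ range (k+1), ((k - a) + 1) * ((k - a) + 2) * 3
      = ∑ a ∈ range (k+1), (a + 1) * (a + 2) * 3 := by
    rw [← Finset.sum_range_reflect]
    apply Finset.sum_congr rfl; intro a ha; simp only [mem_range] at ha
    congr 2 <;> omega
  rw [h3, ← Finset.sum_mul, sumB]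

def sw (t : ℕ × ℕ × ℕ × ℕ) : ℕ × ℕ × ℕ × ℕ := (t.2.1, t.1, t.2.2.2, t.2.2.1)

def Cp (t : ℕ × ℕ × ℕ × ℕ) : Prop :=
  t.1 < t.2.1 ∨ (t.1 = t.2.1 ∧ t.2.2.1 ≤ t.2.2.2)

instance : DecidablePred Cp := fun t => by unfold Cp; infer_instance

lemma sw_sw (t : ℕ × ℕ × ℕ × ℕ) : sw (sw t) = t := rfl

lemma sw_mem {k : ℕ} {t : ℕ × ℕ × ℕ × ℕ} (h : t ∈ tupSet k) : sw t ∈ tupSet k := by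
  rw [mem_tupSet] at h ⊢; unfold sw; simp only; omega

lemma Cp_or (t : ℕ × ℕ × ℕ × ℕ) (h : ¬ Cp t) : Cp (sw t) := by
  unfold Cp sw at *; simp only at *; omega

lemma Cp_excl (t : ℕ × ℕ × ℕ × ℕ) (h1 : Cp t) (h2 : Cp (sw t)) : sw t = t := by
  obtain ⟨a, b, c, d⟩ := t
  unfold Cp sw at *; simp only at *
  rw [Prod.mk.injEq, Prod.mk.injEq, Prod.mk.injEq]; omega

lemma Cp_of_fixed (t : ℕ × ℕ × ℕ × ℕ) (h : sw t = t) : Cp t := by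
  obtain ⟨a, b, c, d⟩ := t
  unfold Cp sw at *; simp only at *
  rw [Prod.mk.injEq, Prod.mk.injEq, Prod.mk.injEq] at h; omega

/-- The swap-fixed tuples. -/
def fxSet (k : ℕ) : Finset (ℕ × ℕ × ℕ × ℕ) := (tupSet k).filter (fun t => sw t = t)

lemma two_mul_card_filter (k : ℕ) :
    2 * ((tupSet k).filter Cp).card = (tupSet k).card + (fxSet k).card := by
  have hsub : fxSet k ⊆ (tupSet k).filter Cp := by
    intro t ht
    simp only [fxSet, mem_filter] at ht
    exact mem_filter.mpr ⟨ht.1, Cp_of_fixed t ht.2⟩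
  have hneg : ((tupSet k).filter (fun t => ¬ Cp t)).card
      = (((tupSet k).filter Cp) \ fxSet k).card := by
    apply Finset.card_nbij' (i := sw) (j := sw)
    · intro t ht
      simp only [mem_coe, mem_filter] at ht
      rw [Finset.mem_coe, Finset.mem_sdiff]
      refine ⟨mem_filter.mpr ⟨sw_mem ht.1, Cp_or t ht.2⟩, ?_⟩
      simp only [fxSet, mem_filter, sw_sw]
      intro hc
      exact ht.2 (Cp_of_fixed t hc.2.symm)
    · intro t ht
      rw [Finset.mem_coe, Finset.mem_sdiff] at ht
      obtain ⟨ht1, ht2⟩ := ht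
      simp only [mem_filter] at ht1
      refine mem_filter.mpr ⟨sw_mem ht1.1, ?_⟩
      intro hc
      have := Cp_excl t ht1.2 hc
      exact ht2 (by simp only [fxSet, mem_filter]; exact ⟨ht1.1, this⟩)
    · intro t _; exact sw_sw t
    · intro t _; exact sw_sw t
  have hsplit : ((tupSet k).filter Cp).card
        + ((tupSet k).filter (fun t => ¬ Cp t)).card = (tupSet k).card :=
    Finset.card_filter_add_card_filter_not Cp
  rw [hneg, Finset.card_sdiff_of_subset hsub] at hsplit
  have hle := Finset.card_le_card hsub
  omega

lemma card_fxSet_even (m : ℕ) : (fxSet (2 * m)).card = m + 1 := by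
  rw [show m + 1 = (range (m+1)).card by simp]
  apply Finset.card_nbij' (i := fun t => t.1) (j := fun a => (a, a, m - a, m - a))
  · intro t ht
    simp only [mem_coe, fxSet, mem_filter] at ht
    obtain ⟨a, b, c, d⟩ := t
    have h1 : a + b + c + d = 2 * m := mem_tupSet.mp ht.1
    have hb : b = a := congrArg Prod.fst ht.2
    have hd : d = c := congrArg (fun p => p.2.2.1) ht.2
    simp only [mem_coe, mem_range]; omega
  · intro a ha
    simp only [mem_coe, mem_range] at ha
    simp only [mem_coe, fxSet, mem_filter, mem_tupSet]
    refine ⟨?_, rfl⟩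
    show a + a + (m - a) + (m - a) = 2 * m; omega
  · intro t ht
    simp only [mem_coe, fxSet, mem_filter] at ht
    obtain ⟨a, b, c, d⟩ := t
    have h1 : a + b + c + d = 2 * m := mem_tupSet.mp ht.1
    have hb : b = a := congrArg Prod.fst ht.2
    have hd : d = c := congrArg (fun p => p.2.2.1) ht.2
    show ((a, a, m - a, m - a) : ℕ × ℕ × ℕ × ℕ) = (a, b, c, d)
    rw [Prod.mk.injEq, Prod.mk.injEq, Prod.mk.injEq]
    omega
  · intro a ha; rfl

lemma card_fxSet_odd (m : ℕ) : (fxSet (2 * m + 1)).card = 0 := by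
  rw [Finset.card_eq_zero, Finset.eq_empty_iff_forall_notMem]
  intro t ht
  simp only [fxSet, mem_filter] at ht
  obtain ⟨a, b, c, d⟩ := t
  have h1 : a + b + c + d = 2 * m + 1 := mem_tupSet.mp ht.1
  have hb : b = a := congrArg Prod.fst ht.2
  have hd : d = c := congrArg (fun p => p.2.2.1) ht.2
  omega

end Aux

/-- A directed multigraph on two vertices `u, v` with `k` edges is recorded, up
to a choice of labelling of the two vertices, by a tuple `(a, b, c, d)` with
`a + b + c + d = k`: `a` loops at `u`, `b` loops at `v`, `c` edges from `u` to
`v` and `d` edges from `v` to `u`. -/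
def TwoVertexGraph (k : ℕ) : Type :=
  {t : ℕ × ℕ × ℕ × ℕ // t.1 + t.2.1 + t.2.2.1 + t.2.2.2 = k}

/-- Two tuples describe isomorphic graphs iff they are equal or related by
swapping the two vertices. -/
def graphIso {k : ℕ} (t t' : TwoVertexGraph k) : Prop :=
  t'.val = t.val ∨ t'.val = (t.val.2.1, t.val.1, t.val.2.2.2, t.val.2.2.1)

section Aux2
open Finset

/-- canonical representative value -/
def canonVal (t : ℕ × ℕ × ℕ × ℕ) : ℕ × ℕ × ℕ × ℕ := if Cp t then t else sw t

lemma canonVal_sw (t : ℕ × ℕ × ℕ × ℕ) : canonVal (sw t) = canonVal t := by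
  unfold canonVal
  by_cases h1 : Cp t
  · by_cases h2 : Cp (sw t)
    · rw [if_pos h1, if_pos h2, Cp_excl t h1 h2]
    · rw [if_pos h1, if_neg h2, sw_sw]
  · have h2 := Cp_or t h1
    rw [if_pos h2, if_neg h1]

lemma canonVal_Cp (t : ℕ × ℕ × ℕ × ℕ) : Cp (canonVal t) := by
  unfold canonVal
  by_cases h1 : Cp t
  · rwa [if_pos h1]
  · rw [if_neg h1]; exact Cp_or t h1

lemma canonVal_mem {k : ℕ} {t : ℕ × ℕ × ℕ × ℕ} (h : t ∈ tupSet k) :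
    canonVal t ∈ tupSet k := by
  unfold canonVal
  by_cases h1 : Cp t
  · rwa [if_pos h1]
  · rw [if_neg h1]; exact sw_mem h

lemma sw_eq_swap (t : ℕ × ℕ × ℕ × ℕ) :
    sw t = (t.2.1, t.1, t.2.2.2, t.2.2.1) := rfl

noncomputable def theEquiv (k : ℕ) :
    Quot (graphIso (k := k)) ≃ {x // x ∈ (tupSet k).filter Cp} where
  toFun := Quot.lift
    (fun t => (⟨canonVal t.val,
        mem_filter.mpr ⟨canonVal_mem (mem_tupSet.mpr t.2), canonVal_Cp t.val⟩⟩ :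
      {x // x ∈ (tupSet k).filter Cp}))
    (by
      intro t t' h
      rcases h with h | h
      · simp only [h]
      · simp only [h, ← sw_eq_swap, canonVal_sw])
  invFun := fun x => Quot.mk _ ⟨x.val, mem_tupSet.mp (mem_filter.mp x.2).1⟩
  left_inv := by
    apply Quot.ind
    intro t
    apply Quot.sound
    show t.val = canonVal t.val ∨ t.val = sw (canonVal t.val)
    unfold canonVal
    by_cases h1 : Cp t.val
    · left; rw [if_pos h1]
    · right; rw [if_neg h1, sw_sw]
  right_inv := by
    intro x
    apply Subtype.ext
    show canonVal x.val = x.val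
    unfold canonVal
    rw [if_pos (mem_filter.mp x.2).2]

lemma card_quot (k : ℕ) :
    Nat.card (Quot (graphIso (k := k))) = ((tupSet k).filter Cp).card := by
  rw [Nat.card_congr (theEquiv k), ← Nat.card_eq_finsetCard]

lemma ceil_half_add_nat (m : ℕ) : (⌈(1/2 : ℚ) + m⌉ : ℤ) = m + 1 := by
  rw [Int.ceil_add_natCast, show (⌈(1/2 : ℚ)⌉ : ℤ) = 1 by
    rw [Int.ceil_eq_iff] <;> norm_num]
  ring

end Aux2

/-- For any positive integer `k`, with `n = ⌈k/2⌉`, the number of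
directed multigraphs on two vertices with exactly `k` edges, up to isomorphism,
is `n(n+1)(3k−4n+1)/3 + (n+1)·⌈(k+1)/2⌉`. -/
theorem card_two_vertex_graphs
    (k : ℕ) (hk : 0 < k) (n : ℤ) (hn : n = ⌈(k : ℚ) / 2⌉) :
    (Nat.card (Quot (graphIso (k := k))) : ℚ) =
      (n * (n + 1) * (3 * k - 4 * n + 1) : ℚ) / 3 +
        (n + 1) * (⌈((k : ℚ) + 1) / 2⌉ : ℤ) := by

  rw [card_quot k]
  have hT := card_tupSet k
  have h2C := two_mul_card_filter k
  rcases Nat.even_or_odd k with he | ho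
  · obtain ⟨m, hm⟩ := he
    have hk2 : k = 2 * m := by omega
    have hF : (fxSet k).card = m + 1 := by rw [hk2]; exact card_fxSet_even m
    have h12 : 12 * ((tupSet k).filter Cp).card
        = (k+1)*(k+2)*(k+3) + 6*(m+1) := by
      have h6 : 12 * ((tupSet k).filter Cp).card
          = 6 * ((tupSet k).card + (fxSet k).card) := by omega
      rw [h6, hF, Nat.mul_add, ← hT]; ring
    have hnm : n = (m : ℤ) := by
      rw [hn, hk2]
      push_cast
      rw [mul_comm, mul_div_assoc]
      norm_num
    have hceil : (⌈((k:ℚ)+1)/2⌉ : ℤ) = (m : ℤ) + 1 := by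
      rw [show ((k:ℚ)+1)/2 = 1/2 + (m:ℚ) by rw [hk2]; push_cast; ring]
      exact ceil_half_add_nat m
    have h12q : 12 * ((((tupSet k).filter Cp).card : ℚ))
        = ((k:ℚ)+1)*((k:ℚ)+2)*((k:ℚ)+3) + 6*((m:ℚ)+1) := by exact_mod_cast h12
    have hkq : (k : ℚ) = 2 * m := by rw [hk2]; push_cast; ring
    rw [hkq] at h12q
    rw [hnm, hceil, hkq]
    push_cast
    linear_combination h12q / 12
  · obtain ⟨m, hm⟩ := ho
    have hF : (fxSet k).card = 0 := by rw [hm]; exact card_fxSet_odd m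
    have h12 : 12 * ((tupSet k).filter Cp).card = (k+1)*(k+2)*(k+3) := by
      have h6 : 12 * ((tupSet k).filter Cp).card
          = 6 * ((tupSet k).card + (fxSet k).card) := by omega
      rw [h6, hF, Nat.mul_add, ← hT]; ring
    have hnm : n = (m : ℤ) + 1 := by
      rw [hn, show ((k:ℚ))/2 = 1/2 + (m:ℚ) by rw [hm]; push_cast; ring]
      exact ceil_half_add_nat m
    have hceil : (⌈((k:ℚ)+1)/2⌉ : ℤ) = (m : ℤ) + 1 := by
      rw [show ((k:ℚ)+1)/2 = ((m+1 : ℕ) : ℚ) by rw [hm]; push_cast; ring]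
      rw [Int.ceil_natCast]
      push_cast; ring
    have h12q : 12 * ((((tupSet k).filter Cp).card : ℚ))
        = ((k:ℚ)+1)*((k:ℚ)+2)*((k:ℚ)+3) := by exact_mod_cast h12
    have hkq : (k : ℚ) = 2 * m + 1 := by rw [hm]; push_cast; ring
    rw [hkq] at h12q
    rw [hnm, hceil, hkq]
    push_cast
    linear_combination h12q / 12
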